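/- Suppose the graph G is bicycle-free at radius r. For each cycle C in G of length at most 2r, let C⁺ denote the set of vertices of G within graph distance r − len(C)/2 of the vertex set of C. Then for any two distinct cycles C₁ ≠ C₂ of length at most 2r, the sets C₁⁺ and C₂⁺ are disjoint. -/

import Mathlib

open scoped Classical

namespace NearRamanujan

variable {V : Type*} [Fintype V] [DecidableEq V]

/-- The set of vertices within distance `r` of `v` in `G`. -/
noncomputable def ball (G : SimpleGraph V) (v : V) (r : ℕ) : Finset V :=
  Finset.univ.filter (fun u => ∃ p : G.Walk v u, p.length ≤ r)

/-- The number of edges of the subgraph of `G` induced on the vertex set `S`. -/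
noncomputable def edgesWithin (G : SimpleGraph V) (S : Finset V) : ℕ :=
  (G.edgeFinset.filter (fun e => ∀ x ∈ e, x ∈ S)).card

/-- `G` is bicycle-free at radius `r`: the subgraph induced on each radius-`r` ball
(which is a connected graph) contains at most one cycle, equivalently it has at most
as many edges as vertices. -/
def BicycleFree (G : SimpleGraph V) (r : ℕ) : Prop :=
  ∀ v : V, edgesWithin G (ball G v r) ≤ (ball G v r).card

/-- The value in `{±1}` of an edge-signing `σ : G.edgeSet → Bool` on `e` (`0` off the edges). -/
noncomputable def edgeSign (G : SimpleGraph V) (σ : G.edgeSet → Bool) (e : Sym2 V) : ℝ :=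
  if h : e ∈ G.edgeSet then (if σ ⟨e, h⟩ then 1 else -1) else 0

/-- The signed adjacency matrix of the edge-signing `σ` of `G`. -/
noncomputable def signedAdj (G : SimpleGraph V) (σ : G.edgeSet → Bool) : Matrix V V ℝ :=
  fun u v => if G.Adj u v then edgeSign G σ s(u, v) else 0

/-- The signed non-backtracking matrix of the edge-signing `σ` of `G`, indexed by
the darts (directed edges) of `G`. -/
noncomputable def nbMatrix (G : SimpleGraph V) (σ : G.edgeSet → Bool) :
    Matrix G.Dart G.Dart ℝ :=
  fun e f => if e.snd = f.fst ∧ f.snd ≠ e.fst then edgeSign G σ s(f.fst, f.snd) else 0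


/-- The set `C⁺` of vertices within distance `r − len(C)/2` of the cycle `c`. -/
noncomputable def cyclePlus (G : SimpleGraph V) (r : ℕ) {u : V} (c : G.Walk u u) :
    Finset V :=
  Finset.univ.filter (fun x =>
    ∃ y ∈ c.support, ∃ p : G.Walk x y, p.length ≤ r - c.length / 2)

open SimpleGraph in
set_option linter.unusedSectionVars false in
private lemma lemA (H : SimpleGraph V) (S : Finset V) (x : V)
    (hreach : ∀ w ∈ S, ∃ p : H.Walk w x, ∀ z ∈ p.support, z ∈ S) :
    S.card ≤ edgesWithin H S + 1 := by
  classical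
  set P : V → ℕ → Prop := fun w n => ∃ p : H.Walk w x, p.length = n ∧ ∀ z ∈ p.support, z ∈ S
    with hPdef
  set d : V → ℕ := fun w => if hw : ∃ n, P w n then Nat.find hw else 0 with hd
  have key : ∀ w : V, ∃ y : V, w ∈ S.erase x → H.Adj w y ∧ y ∈ S ∧ d y < d w := by
    intro w
    by_cases hw : w ∈ S.erase x
    · have hwS : w ∈ S := Finset.mem_of_mem_erase hw
      have hwx : w ≠ x := Finset.ne_of_mem_erase hw
      have hex : ∃ n, P w n := by
        obtain ⟨p, hp⟩ := hreach w hwS; exact ⟨p.length, p, rfl, hp⟩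
      have hspec : P w (Nat.find hex) := Nat.find_spec hex
      obtain ⟨p, hplen, hpS⟩ := hspec
      cases p with
      | nil => exact absurd rfl hwx
      | @cons _ y _ hadj q =>
        refine ⟨y, fun _ => ⟨hadj, ?_, ?_⟩⟩
        · exact hpS y (by simp [Walk.support_cons])
        · have hey : ∃ n, P y n :=
            ⟨q.length, q, rfl, fun z hz => hpS z (by simp [Walk.support_cons, hz])⟩
          have h1 : d y ≤ q.length := by
            rw [hd]; simp only
            rw [dif_pos hey]
            exact Nat.find_le ⟨q, rfl, fun z hz => hpS z (by simp [Walk.support_cons, hz])⟩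
          have h2 : d w = q.length + 1 := by
            rw [hd]; simp only
            rw [dif_pos hex]
            simp only [Walk.length_cons] at hplen
            omega
          omega
    · exact ⟨w, fun h => absurd h hw⟩
  choose nxt hnxt using key
  have hmaps : ∀ w ∈ S.erase x,
      s(w, nxt w) ∈ H.edgeFinset.filter (fun e => ∀ z ∈ e, z ∈ S) := by
    intro w hw
    obtain ⟨hadj, hyS, _⟩ := hnxt w hw
    rw [Finset.mem_filter, mem_edgeFinset, mem_edgeSet]
    refine ⟨hadj, fun z hz => ?_⟩
    rcases Sym2.mem_iff.1 hz with rfl | rfl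
    · exact Finset.mem_of_mem_erase hw
    · exact hyS
  have hinj : Set.InjOn (fun w => s(w, nxt w)) (S.erase x) := by
    intro w₁ hw₁ w₂ hw₂ hEq
    simp only [Sym2.eq_iff] at hEq
    rcases hEq with ⟨h1, _⟩ | ⟨h1, h2⟩
    · exact h1
    · obtain ⟨_, _, hd1⟩ := hnxt w₁ hw₁
      obtain ⟨_, _, hd2⟩ := hnxt w₂ hw₂
      rw [h2] at hd1; rw [← h1] at hd2
      omega
  have hcard : (S.erase x).card ≤ edgesWithin H S := by
    unfold edgesWithin
    exact Finset.card_le_card_of_injOn _ hmaps hinj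
  by_cases hx : x ∈ S
  · have h3 := Finset.card_erase_of_mem hx
    have h4 : 1 ≤ S.card := Finset.card_pos.2 ⟨x, hx⟩
    omega
  · rw [Finset.erase_eq_of_notMem hx] at hcard; omega

open SimpleGraph in
set_option linter.unusedSectionVars false in
private lemma bypass (H : SimpleGraph V) (S : Finset V) (e : Sym2 V) {a b : V}
    (hab : s(a, b) = e)
    (wab : (H.deleteEdges {e}).Walk a b) (hwab : ∀ z ∈ wab.support, z ∈ S) :
    ∀ {w w' : V} (p : H.Walk w w'), (∀ z ∈ p.support, z ∈ S) →
      ∃ q : (H.deleteEdges {e}).Walk w w', ∀ z ∈ q.support, z ∈ S := by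
  intro w w' p
  induction p with
  | nil => exact fun hp => ⟨Walk.nil, hp⟩
  | @cons w y w' hadj p ih =>
    intro hp
    have hpS : ∀ z ∈ p.support, z ∈ S := fun z hz => hp z (by simp [Walk.support_cons, hz])
    obtain ⟨q, hq⟩ := ih hpS
    by_cases hef : s(w, y) = e
    · have heq : s(w, y) = s(a, b) := by rw [hab, hef]
      rw [Sym2.eq_iff] at heq
      rcases heq with ⟨h1, h2⟩ | ⟨h1, h2⟩
      · subst h1; subst h2
        exact ⟨wab.append q, fun z hz => by
          rcases (Walk.mem_support_append_iff _ _).1 hz with h | h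
          exacts [hwab z h, hq z h]⟩
      · subst h1; subst h2
        exact ⟨wab.reverse.append q, fun z hz => by
          rcases (Walk.mem_support_append_iff _ _).1 hz with h | h
          · exact hwab z (by rwa [Walk.support_reverse, List.mem_reverse] at h)
          · exact hq z h⟩
    · have hadj' : (H.deleteEdges {e}).Adj w y := by
        rw [deleteEdges_adj]; exact ⟨hadj, by simpa using hef⟩
      refine ⟨Walk.cons hadj' q, fun z hz => ?_⟩
      rw [Walk.support_cons, List.mem_cons] at hz
      rcases hz with rfl | hz
      · exact hp z (by simp [Walk.support_cons])
      · exact hq z hz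

open SimpleGraph in
set_option linter.unusedSectionVars false in
private lemma detour (H : SimpleGraph V) (S : Finset V) (e : Sym2 V) :
    ∀ {w w' : V} (p : H.Walk w w'), p.IsTrail → (∀ z ∈ p.support, z ∈ S) → e ∈ p.edges →
      ∃ (a b : V) (q₁ : (H.deleteEdges {e}).Walk w a) (q₂ : (H.deleteEdges {e}).Walk b w'),
        s(a, b) = e ∧ (∀ z ∈ q₁.support, z ∈ S) ∧ (∀ z ∈ q₂.support, z ∈ S) := by
  intro w w' p
  induction p with
  | nil => intro _ _ he; simp [Walk.edges_nil] at he
  | @cons w y w' hadj p ih =>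
    intro ht hS he
    have hS' : ∀ z ∈ p.support, z ∈ S := fun z hz => hS z (by simp [Walk.support_cons, hz])
    by_cases hef : e = s(w, y)
    · have hnodup := ht.edges_nodup
      rw [Walk.edges_cons] at hnodup
      have hnotin : e ∉ p.edges := by rw [hef]; exact List.Nodup.notMem hnodup
      refine ⟨w, y, Walk.nil, p.transfer _ (fun f hf => ?_), hef.symm, ?_, ?_⟩
      · rw [edgeSet_deleteEdges]
        exact ⟨p.edges_subset_edgeSet hf, by
          simp only [Set.mem_singleton_iff]; rintro rfl; exact hnotin hf⟩
      · intro z hz; simp only [Walk.support_nil, List.mem_singleton] at hz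
        subst hz; exact hS z (by simp [Walk.support_cons])
      · intro z hz; rw [Walk.support_transfer] at hz; exact hS' z hz
    · have he' : e ∈ p.edges := by
        rw [Walk.edges_cons, List.mem_cons] at he
        rcases he with h | h
        · exact absurd h hef
        · exact h
      obtain ⟨a, b, q₁, q₂, h1, h2, h3⟩ := ih ((Walk.isTrail_cons _ _).1 ht).1 hS' he'
      have hadj' : (H.deleteEdges {e}).Adj w y := by
        rw [deleteEdges_adj]
        exact ⟨hadj, by simpa using fun h => hef h.symm⟩
      refine ⟨a, b, Walk.cons hadj' q₁, q₂, h1, fun z hz => ?_, h3⟩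
      rw [Walk.support_cons, List.mem_cons] at hz
      rcases hz with rfl | hz
      · exact hS z (by simp [Walk.support_cons])
      · exact h2 z hz

open SimpleGraph in
set_option linter.unusedSectionVars false in
private lemma count (H : SimpleGraph V) (S : Finset V) (e : Sym2 V)
    (he : e ∈ H.edgeSet) (heS : ∀ z ∈ e, z ∈ S) :
    edgesWithin (H.deleteEdges {e}) S < edgesWithin H S := by
  unfold edgesWithin
  apply Finset.card_lt_card
  constructor
  · intro f hf
    simp only [Finset.mem_filter, mem_edgeFinset, edgeSet_deleteEdges] at hf
    rw [Finset.mem_filter, mem_edgeFinset]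
    exact ⟨hf.1.1, hf.2⟩
  · intro hsub
    have h1 : e ∈ H.edgeFinset.filter (fun e => ∀ x ∈ e, x ∈ S) := by
      rw [Finset.mem_filter, mem_edgeFinset]; exact ⟨he, heS⟩
    have h2 := hsub h1
    simp only [Finset.mem_filter, mem_edgeFinset, edgeSet_deleteEdges] at h2
    exact h2.1.2 rfl

open SimpleGraph in
set_option linter.unusedSectionVars false in
private lemma lemB (H : SimpleGraph V) (S : Finset V) (x : V)
    (hreach : ∀ w ∈ S, ∃ p : H.Walk w x, ∀ z ∈ p.support, z ∈ S)
    {u : V} (c : H.Walk u u) (hc : c.IsCycle) (hcS : ∀ z ∈ c.support, z ∈ S) :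
    S.card ≤ edgesWithin H S := by
  obtain ⟨e, he⟩ : ∃ e, e ∈ c.edges := by
    cases c with
    | nil => exact absurd rfl hc.ne_nil
    | cons h p => exact ⟨_, by rw [Walk.edges_cons]; exact List.mem_cons_self⟩
  obtain ⟨a, b, q₁, q₂, hab, hq₁, hq₂⟩ := detour H S e c hc.isTrail hcS he
  have hwabS : ∀ z ∈ (q₁.reverse.append q₂.reverse).support, z ∈ S := by
    intro z hz
    rcases (Walk.mem_support_append_iff _ _).1 hz with h | h
    · exact hq₁ z (by rwa [Walk.support_reverse, List.mem_reverse] at h)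
    · exact hq₂ z (by rwa [Walk.support_reverse, List.mem_reverse] at h)
  have hreach' : ∀ w ∈ S, ∃ p : (H.deleteEdges {e}).Walk w x, ∀ z ∈ p.support, z ∈ S := by
    intro w hw
    obtain ⟨p, hp⟩ := hreach w hw
    exact bypass H S e hab (q₁.reverse.append q₂.reverse) hwabS p hp
  have h1 := lemA (H.deleteEdges {e}) S x hreach'
  have h2 : edgesWithin (H.deleteEdges {e}) S < edgesWithin H S := by
    apply count H S e (c.edges_subset_edgeSet he)
    intro z hz
    rw [← hab] at hz
    rcases Sym2.mem_iff.1 hz with rfl | rfl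
    · exact hq₁ z q₁.end_mem_support
    · exact hq₂ z q₂.start_mem_support
  omega

open SimpleGraph in
set_option linter.unusedSectionVars false in
private lemma final (H : SimpleGraph V) (S : Finset V) (x : V)
    (hreach : ∀ w ∈ S, ∃ p : H.Walk w x, ∀ z ∈ p.support, z ∈ S)
    {u v : V} (c : H.Walk u u) (c' : H.Walk v v)
    (hc : c.IsCycle) (hc' : c'.IsCycle)
    (hcS : ∀ z ∈ c.support, z ∈ S) (hc'S : ∀ z ∈ c'.support, z ∈ S)
    (e : Sym2 V) (he' : e ∈ c'.edges) (hce : e ∉ c.edges) :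
    S.card < edgesWithin H S := by
  obtain ⟨a, b, q₁, q₂, hab, hq₁, hq₂⟩ := detour H S e c' hc'.isTrail hc'S he'
  have hwabS : ∀ z ∈ (q₁.reverse.append q₂.reverse).support, z ∈ S := by
    intro z hz
    rcases (Walk.mem_support_append_iff _ _).1 hz with h | h
    · exact hq₁ z (by rwa [Walk.support_reverse, List.mem_reverse] at h)
    · exact hq₂ z (by rwa [Walk.support_reverse, List.mem_reverse] at h)
  have hreach' : ∀ w ∈ S, ∃ p : (H.deleteEdges {e}).Walk w x, ∀ z ∈ p.support, z ∈ S := by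
    intro w hw
    obtain ⟨p, hp⟩ := hreach w hw
    exact bypass H S e hab (q₁.reverse.append q₂.reverse) hwabS p hp
  have htr : ∀ f ∈ c.edges, f ∈ (H.deleteEdges {e}).edgeSet := by
    intro f hf
    rw [edgeSet_deleteEdges]
    exact ⟨c.edges_subset_edgeSet hf, by
      simp only [Set.mem_singleton_iff]; rintro rfl; exact hce hf⟩
  have h1 := lemB (H.deleteEdges {e}) S x hreach' (c.transfer _ htr) (hc.transfer htr)
    (by rw [Walk.support_transfer]; exact hcS)
  have h2 : edgesWithin (H.deleteEdges {e}) S < edgesWithin H S := by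
    apply count H S e (c'.edges_subset_edgeSet he')
    intro z hz
    rw [← hab] at hz
    rcases Sym2.mem_iff.1 hz with rfl | rfl
    · exact hq₁ z q₁.end_mem_support
    · exact hq₂ z q₂.start_mem_support
  omega

open SimpleGraph in
set_option linter.unusedSectionVars false in
private lemma ball_walk_mem (G : SimpleGraph V) (r : ℕ) {x z y : V} (p : G.Walk x y)
    (hp : p.length ≤ r) (hz : z ∈ p.support) : z ∈ ball G x r := by
  simp only [ball, Finset.mem_filter, Finset.mem_univ, true_and]
  exact ⟨p.takeUntil z hz, (p.length_takeUntil_le hz).trans hp⟩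

open SimpleGraph in
set_option linter.unusedSectionVars false in
private lemma exists_short_walk (G : SimpleGraph V) {u y z : V} (c : G.Walk u u)
    (hy : y ∈ c.support) (hz : z ∈ c.support) :
    ∃ q : G.Walk y z, q.length ≤ c.length / 2 := by
  have hsplit := c.take_spec hy
  have hlen : (c.takeUntil y hy).length + (c.dropUntil y hy).length = c.length := by
    have := congr_arg Walk.length hsplit; rwa [Walk.length_append] at this
  have hzmem : z ∈ (c.takeUntil y hy).support ∨ z ∈ (c.dropUntil y hy).support := by
    rw [← Walk.mem_support_append_iff, hsplit]; exact hz
  obtain ⟨q₁, q₂, hq⟩ : ∃ (q₁ q₂ : G.Walk y z), q₁.length + q₂.length = c.length := by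
    rcases hzmem with h | h
    · refine ⟨((c.takeUntil y hy).dropUntil z h).reverse,
        (c.dropUntil y hy).append ((c.takeUntil y hy).takeUntil z h), ?_⟩
      have h2 : ((c.takeUntil y hy).takeUntil z h).length +
          ((c.takeUntil y hy).dropUntil z h).length = (c.takeUntil y hy).length := by
        have := congr_arg Walk.length ((c.takeUntil y hy).take_spec h)
        rwa [Walk.length_append] at this
      rw [Walk.length_reverse, Walk.length_append]; omega
    · refine ⟨(c.dropUntil y hy).takeUntil z h,
        (((c.dropUntil y hy).dropUntil z h).append (c.takeUntil y hy)).reverse, ?_⟩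
      have h2 : ((c.dropUntil y hy).takeUntil z h).length +
          ((c.dropUntil y hy).dropUntil z h).length = (c.dropUntil y hy).length := by
        have := congr_arg Walk.length ((c.dropUntil y hy).take_spec h)
        rwa [Walk.length_append] at this
      rw [Walk.length_reverse, Walk.length_append]; omega
  rcases le_or_gt q₁.length (c.length / 2) with h | h
  · exact ⟨q₁, h⟩
  · exact ⟨q₂, by omega⟩

open SimpleGraph in
set_option linter.unusedSectionVars false in
private lemma cycle_support_subset_ball (G : SimpleGraph V) (r : ℕ) {x u : V}
    (c : G.Walk u u) (hlc : c.length ≤ 2 * r) (hx : x ∈ cyclePlus G r c) :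
    ∀ z ∈ c.support, z ∈ ball G x r := by
  simp only [cyclePlus, Finset.mem_filter, Finset.mem_univ, true_and] at hx
  obtain ⟨y, hy, p, hp⟩ := hx
  intro z hz
  obtain ⟨q, hq⟩ := exists_short_walk G c hy hz
  refine ball_walk_mem G r (p.append q) ?_ (p.append q).end_mem_support
  rw [Walk.length_append]; omega

open SimpleGraph in
set_option linter.unusedSectionVars false in
private lemma reach_ball (G : SimpleGraph V) (r : ℕ) (x : V) :
    ∀ w ∈ ball G x r, ∃ p : G.Walk w x, ∀ z ∈ p.support, z ∈ ball G x r := by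
  intro w hw
  simp only [ball, Finset.mem_filter, Finset.mem_univ, true_and] at hw
  obtain ⟨p, hp⟩ := hw
  exact ⟨p.reverse, fun z hz =>
    ball_walk_mem G r p hp (by rwa [Walk.support_reverse, List.mem_reverse] at hz)⟩


/-- Proposition 2.16.  Suppose `G` is bicycle-free at radius `r`. For a
cycle `C` of length at most `2r`, let `C⁺` be the set of vertices within distance
`r − len(C)/2` of `C`.  Then for distinct cycles `C₁ ≠ C₂` of length at most `2r`
(distinct meaning their edge sets differ), the sets `C₁⁺` and `C₂⁺` are disjoint. -/
theorem cyclePlus_disjoint_of_bicycleFree {V : Type*} [Fintype V] [DecidableEq V]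
    (G : SimpleGraph V) (r : ℕ) (h : BicycleFree G r)
    (u v : V) (c₁ : G.Walk u u) (c₂ : G.Walk v v)
    (h₁ : c₁.IsCycle) (h₂ : c₂.IsCycle)
    (hl₁ : c₁.length ≤ 2 * r) (hl₂ : c₂.length ≤ 2 * r)
    (hne : c₁.edges.toFinset ≠ c₂.edges.toFinset) :
    ∀ x : V, x ∈ cyclePlus G r c₁ → x ∉ cyclePlus G r c₂ := by
  intro x hx1 hx2
  have hS1 := cycle_support_subset_ball G r c₁ hl₁ hx1
  have hS2 := cycle_support_subset_ball G r c₂ hl₂ hx2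
  have hreach := reach_ball G r x
  obtain ⟨e, he⟩ : ∃ e, (e ∈ c₂.edges ∧ e ∉ c₁.edges) ∨ (e ∈ c₁.edges ∧ e ∉ c₂.edges) := by
    by_contra hcon
    push_neg at hcon
    apply hne
    ext e
    simp only [List.mem_toFinset]
    have := hcon e
    tauto
  have hcontra : (ball G x r).card < edgesWithin G (ball G x r) := by
    rcases he with ⟨hm, hn⟩ | ⟨hm, hn⟩
    · exact final G (ball G x r) x hreach c₁ c₂ h₁ h₂ hS1 hS2 e hm hn
    · exact final G (ball G x r) x hreach c₂ c₁ h₂ h₁ hS2 hS1 e hm hn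
  have := h x
  omega

end NearRamanujan
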